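/- Let b ∈ ℝ and let g : (0,∞) → ℝ and F : (0,∞) → ℝ be functions such that for all q, q' > 0 one has q²·(g(q·q'))² + b/(q')² = F(q) (i.e., the left-hand side is independent of q'). Then there exists a constant C ∈ ℝ such that (g(ξ))² = C − b/ξ² for all ξ > 0 (and F(q) = C·q² for all q > 0). -/
import Mathlib


theorem kinetic_coefficient_classification (b : ℝ) (g F : ℝ → ℝ)
    (h : ∀ q q' : ℝ, 0 < q → 0 < q' →
      q ^ 2 * (g (q * q')) ^ 2 + b / q' ^ 2 = F q) :
    ∃ C : ℝ, (∀ ξ : ℝ, 0 < ξ → (g ξ) ^ 2 = C - b / ξ ^ 2) ∧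
      (∀ q : ℝ, 0 < q → F q = C * q ^ 2) := by
  refine ⟨F 1, ?_, ?_⟩
  · intro ξ hξ
    have := h 1 ξ one_pos hξ
    simp only [one_pow, one_mul] at this
    linarith
  · intro q hq
    have hg1 : (g 1) ^ 2 = F 1 - b := by
      have := h 1 1 one_pos one_pos
      simp only [one_pow, one_mul, mul_one, div_one] at this
      linarith
    have := h q (1/q) hq (by positivity)
    have hq1 : q * (1/q) = 1 := by field_simp
    rw [hq1, hg1] at this
    have hne : q ≠ 0 := ne_of_gt hq
    field_simp at this
    nlinarith [sq_nonneg q]
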